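/- The monomial symmetric function m_{(2,2,1^{n-1})} of degree n+3 expands in the elementary basis as m_{(2,2,1^{n-1})} = e_{(n+1,2)} - (n+1) e_{(n+2,1)} + (n(n+3)/2) e_{(n+3)}. -/
import Mathlib


section MsymmTwoTwoOnesAux
set_option linter.unusedSectionVars false
set_option maxHeartbeats 1000000
open Finset MvPolynomial
variable {σ : Type*} [Fintype σ] [DecidableEq σ]

lemma count_val (S : Finset σ) (x : σ) : S.val.count x = if x ∈ S then 1 else 0 := by
  split
  · exact Multiset.count_eq_one_of_mem S.nodup ‹_›
  · exact Multiset.count_eq_zero_of_notMem ‹_›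

lemma count_wu {W U : Finset σ} (hd : Disjoint W U) (x : σ) :
    (2 • W.val + U.val).count x = if x ∈ W then 2 else if x ∈ U then 1 else 0 := by
  have hdl := Finset.disjoint_left.mp hd
  rw [Multiset.count_add, Multiset.count_nsmul, count_val, count_val]
  by_cases hW : x ∈ W <;> by_cases hU : x ∈ U <;> simp [hW, hU] <;> exact absurd hU (hdl hW)

lemma mem_wu {W U : Finset σ} (hd : Disjoint W U) (x : σ) :
    x ∈ 2 • W.val + U.val ↔ (x ∈ W ∨ x ∈ U) := by
  rw [← Multiset.count_pos, count_wu hd]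
  by_cases hW : x ∈ W <;> by_cases hU : x ∈ U <;> simp [hW, hU]

lemma dedup_wu {W U : Finset σ} (hd : Disjoint W U) :
    (2 • W.val + U.val).dedup = W.val + U.val := by
  have hdl := Finset.disjoint_left.mp hd
  apply Multiset.ext.mpr
  intro x
  rw [Multiset.count_dedup, Multiset.count_add, count_val, count_val]
  by_cases hW : x ∈ W <;> by_cases hU : x ∈ U <;>
    simp [mem_wu hd, hW, hU] <;> exact absurd hU (hdl hW)

lemma parts_wu {W U : Finset σ} (hd : Disjoint W U) {n : ℕ} (hW : W.card = 2)
    (hU : U.card = n - 1) :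
    (2 • W.val + U.val).dedup.map (fun x => (2 • W.val + U.val).count x) =
      2 ::ₘ 2 ::ₘ Multiset.replicate (n - 1) 1 := by
  have hdl := Finset.disjoint_left.mp hd
  rw [dedup_wu hd, Multiset.map_add]
  have h1 : W.val.map (fun x => (2 • W.val + U.val).count x) = W.val.map (fun _ => 2) :=
    Multiset.map_congr rfl (fun x hx => by
      rw [count_wu hd]; simp [Finset.mem_def.mpr hx])
  have h2 : U.val.map (fun x => (2 • W.val + U.val).count x) = U.val.map (fun _ => 1) :=
    Multiset.map_congr rfl (fun x hx => by
      have hxU : x ∈ U := Finset.mem_def.mpr hx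
      have hxW : x ∉ W := fun h => hdl h hxU
      rw [count_wu hd]; simp [hxU, hxW])
  rw [h1, h2, Multiset.map_const', Multiset.map_const']
  simp only [Finset.card_val, hW, hU]
  rfl

lemma card_wu {W U : Finset σ} {n : ℕ} (hn : 1 ≤ n) (hW : W.card = 2) (hU : U.card = n - 1) :
    Multiset.card (2 • W.val + U.val) = n + 3 := by
  simp [hW, hU]; omega

lemma filt2 {W U : Finset σ} (hd : Disjoint W U) :
    (2 • W.val + U.val).toFinset.filter (fun x => (2 • W.val + U.val).count x = 2) = W := by
  have hdl := Finset.disjoint_left.mp hd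
  ext x
  simp only [Finset.mem_filter, Multiset.mem_toFinset, mem_wu hd, count_wu hd]
  by_cases hW : x ∈ W <;> by_cases hU : x ∈ U <;> simp [hW, hU]

lemma filt1 {W U : Finset σ} (hd : Disjoint W U) :
    (2 • W.val + U.val).toFinset.filter (fun x => (2 • W.val + U.val).count x = 1) = U := by
  have hdl := Finset.disjoint_left.mp hd
  ext x
  simp only [Finset.mem_filter, Multiset.mem_toFinset, mem_wu hd, count_wu hd]
  by_cases hW : x ∈ W <;> by_cases hU : x ∈ U <;> simp [hW, hU]
  exact absurd hU (hdl hW)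

lemma counts_one_two {s : Multiset σ} {n : ℕ}
    (hp : s.dedup.map (fun x => s.count x) = 2 ::ₘ 2 ::ₘ Multiset.replicate (n-1) 1)
    {x : σ} (hx : x ∈ s) : s.count x = 2 ∨ s.count x = 1 := by
  have h : s.count x ∈ s.dedup.map (fun x => s.count x) :=
    Multiset.mem_map_of_mem _ (Multiset.mem_dedup.mpr hx)
  rw [hp] at h
  rcases Multiset.mem_cons.mp h with h | h
  · exact Or.inl h
  rcases Multiset.mem_cons.mp h with h | h
  · exact Or.inl h
  · exact Or.inr (Multiset.eq_of_mem_replicate h)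

lemma card_filter_count {s : Multiset σ} {n : ℕ} (k : ℕ)
    (hp : s.dedup.map (fun x => s.count x) = 2 ::ₘ 2 ::ₘ Multiset.replicate (n-1) 1) :
    (s.toFinset.filter (fun x => s.count x = k)).card =
      (2 ::ₘ 2 ::ₘ Multiset.replicate (n-1) 1).count k := by
  rw [← hp, Multiset.count_map]
  rw [Finset.card_def, Finset.filter_val, Multiset.toFinset_val]
  congr 1
  exact Multiset.filter_congr (fun x _ => by exact eq_comm)

lemma recon {s : Multiset σ} {n : ℕ}
    (hp : s.dedup.map (fun x => s.count x) = 2 ::ₘ 2 ::ₘ Multiset.replicate (n-1) 1) :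
    s = 2 • (s.toFinset.filter (fun x => s.count x = 2)).val
        + (s.toFinset.filter (fun x => s.count x = 1)).val := by
  apply Multiset.ext.mpr
  intro x
  rw [Multiset.count_add, Multiset.count_nsmul, count_val, count_val]
  by_cases hx : x ∈ s
  · rcases counts_one_two hp hx with h | h <;>
      simp [Finset.mem_filter, Multiset.mem_toFinset, hx, h]
  · simp [Finset.mem_filter, Multiset.mem_toFinset, hx, Multiset.count_eq_zero_of_notMem hx]

noncomputable def S2pol (σ : Type*) [Fintype σ] [DecidableEq σ] (j m : ℕ) : MvPolynomial σ ℚ :=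
  ∑ q ∈ (powersetCard j (univ : Finset σ) ×ˢ powersetCard m univ).filter
      (fun q => Disjoint q.1 q.2),
    ((2 • q.1.val + q.2.val).map X).prod

lemma msymm_eq {n : ℕ} (hn : 1 ≤ n) (p : Nat.Partition (n+3))
    (hp : p.parts = 2 ::ₘ 2 ::ₘ Multiset.replicate (n-1) 1) :
    msymm σ ℚ p = S2pol σ 2 (n-1) := by
  rw [msymm, S2pol]
  have hparts : ∀ s : {a : Sym σ (n+3) // Nat.Partition.ofSym a = p},
      s.1.1.dedup.map (fun x => s.1.1.count x) = 2 ::ₘ 2 ::ₘ Multiset.replicate (n-1) 1 := by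
    intro s
    have := congrArg Nat.Partition.parts s.2
    rw [hp] at this
    exact this
  refine Finset.sum_bij'
    (i := fun s _ => (s.1.1.toFinset.filter (fun x => s.1.1.count x = 2),
        s.1.1.toFinset.filter (fun x => s.1.1.count x = 1)))
    (j := fun q hq => ⟨⟨2 • q.1.val + q.2.val, ?_⟩, ?_⟩) ?_ ?_ ?_ ?_ ?_
  case _ => -- card
    have hq' := hq
    simp only [Finset.mem_filter, Finset.mem_product, Finset.mem_powersetCard_univ] at hq'
    exact card_wu hn hq'.1.1 hq'.1.2
  case _ => -- ofSym = p
    apply Nat.Partition.ext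
    have hq' := hq
    simp only [Finset.mem_filter, Finset.mem_product, Finset.mem_powersetCard_univ] at hq'
    rw [hp]
    exact parts_wu hq'.2 hq'.1.1 hq'.1.2
  case _ => -- i maps in
    intro s hs
    simp only [Finset.mem_filter, Finset.mem_product, Finset.mem_powersetCard_univ]
    refine ⟨⟨?_, ?_⟩, ?_⟩
    · rw [card_filter_count 2 (hparts s)]; simp [Multiset.count_replicate]
    · rw [card_filter_count 1 (hparts s)]; simp [Multiset.count_replicate]
    · rw [Finset.disjoint_left]
      intro x h2 h1
      rw [Finset.mem_filter] at h2 h1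
      omega
  case _ => intro q hq; exact Finset.mem_univ _
  case _ => -- left inverse
    intro s hs
    apply Subtype.ext
    apply Subtype.ext
    exact (recon (hparts s)).symm
  case _ => -- right inverse
    intro q hq
    simp only [Finset.mem_filter, Finset.mem_product, Finset.mem_powersetCard_univ] at hq
    have h2 := filt2 hq.2
    have h1 := filt1 hq.2
    exact Prod.ext h2 h1
  case _ => -- values
    intro s hs
    exact congrArg (fun m => (Multiset.map X m).prod) (recon (hparts s))

lemma val_pair_eq (S T : Finset σ) :
    S.val + T.val = 2 • (S ∩ T).val + ((S ∪ T) \ (S ∩ T)).val := by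
  apply Multiset.ext.mpr
  intro x
  rw [Multiset.count_add, Multiset.count_add, Multiset.count_nsmul,
    count_val, count_val, count_val, count_val]
  by_cases hS : x ∈ S <;> by_cases hT : x ∈ T <;>
    simp [Finset.mem_inter, Finset.mem_sdiff, Finset.mem_union, hS, hT]

lemma key (a b j : ℕ) (hja : j ≤ a) (hjb : j ≤ b) :
    ∑ p ∈ ((powersetCard a (univ : Finset σ)) ×ˢ powersetCard b univ).filter
        (fun p => (p.1 ∩ p.2).card = j),
      ((p.1.val + p.2.val).map (X : σ → MvPolynomial σ ℚ)).prod
    = (a + b - 2*j).choose (b - j) • S2pol σ j (a + b - 2*j) := by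
  rw [S2pol, Finset.smul_sum]
  have step : ∀ q ∈ (powersetCard j (univ : Finset σ) ×ˢ powersetCard (a+b-2*j) univ).filter
      (fun q => Disjoint q.1 q.2),
      (a + b - 2*j).choose (b - j) • ((2 • q.1.val + q.2.val).map (X : σ → MvPolynomial σ ℚ)).prod
      = ∑ s ∈ powersetCard (b - j) q.2, ((2 • q.1.val + q.2.val).map (X : σ → MvPolynomial σ ℚ)).prod := by
    intro q hq
    simp only [Finset.mem_filter, Finset.mem_product, Finset.mem_powersetCard_univ] at hq
    rw [Finset.sum_const, Finset.card_powersetCard, hq.1.2]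
  have hsig := Finset.sum_sigma ((powersetCard j (univ : Finset σ) ×ˢ powersetCard (a+b-2*j) univ).filter
        (fun q => Disjoint q.1 q.2)) (fun q => powersetCard (b - j) q.2)
      (fun x : (_ : Finset σ × Finset σ) × Finset σ =>
        ((2 • x.1.1.val + x.1.2.val).map (X : σ → MvPolynomial σ ℚ)).prod)
  have h2 : ∑ q ∈ (powersetCard j (univ : Finset σ) ×ˢ powersetCard (a+b-2*j) univ).filter
        (fun q => Disjoint q.1 q.2),
        (a + b - 2*j).choose (b - j) • ((2 • q.1.val + q.2.val).map (X : σ → MvPolynomial σ ℚ)).prod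
      = ∑ q ∈ (powersetCard j (univ : Finset σ) ×ˢ powersetCard (a+b-2*j) univ).filter
        (fun q => Disjoint q.1 q.2),
        ∑ s ∈ powersetCard (b - j) q.2, ((2 • q.1.val + q.2.val).map (X : σ → MvPolynomial σ ℚ)).prod :=
    Finset.sum_congr rfl step
  rw [h2.trans hsig.symm]
  refine Finset.sum_bij'
    (i := fun p _ => (⟨(p.1 ∩ p.2, (p.1 ∪ p.2) \ (p.1 ∩ p.2)), p.2 \ p.1⟩ :
      (_ : Finset σ × Finset σ) × Finset σ))
    (j := fun x _ => (x.1.1 ∪ (x.1.2 \ x.2), x.1.1 ∪ x.2))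
    ?_ ?_ ?_ ?_ ?_
  · -- i maps in
    intro p hp
    simp only [Finset.mem_filter, Finset.mem_product, Finset.mem_powersetCard_univ] at hp
    obtain ⟨⟨hS, hT⟩, hj⟩ := hp
    have hcu := Finset.card_union_add_card_inter p.1 p.2
    rw [Finset.mem_sigma]
    refine ⟨?_, ?_⟩
    · simp only [Finset.mem_filter, Finset.mem_product, Finset.mem_powersetCard_univ]
      refine ⟨⟨hj, ?_⟩, Finset.disjoint_sdiff⟩
      rw [Finset.card_sdiff_of_subset Finset.inter_subset_union]
      omega
    · dsimp only
      rw [Finset.mem_powersetCard]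
      constructor
      · intro x hx
        simp only [Finset.mem_sdiff, Finset.mem_union, Finset.mem_inter] at *
        tauto
      · have := Finset.card_sdiff_add_card_inter p.2 p.1
        rw [Finset.inter_comm] at this
        omega
  · -- j maps in
    intro x hx
    rw [Finset.mem_sigma] at hx
    obtain ⟨hq, hs⟩ := hx
    simp only [Finset.mem_filter, Finset.mem_product, Finset.mem_powersetCard_univ] at hq
    obtain ⟨⟨hW, hU⟩, hd⟩ := hq
    rw [Finset.mem_powersetCard] at hs
    obtain ⟨hsub, hcs⟩ := hs
    have hdl := Finset.disjoint_left.mp hd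
    have hinter : (x.1.1 ∪ (x.1.2 \ x.2)) ∩ (x.1.1 ∪ x.2) = x.1.1 := by
      ext y
      simp only [Finset.mem_inter, Finset.mem_union, Finset.mem_sdiff]
      have h1 : y ∈ x.1.1 → y ∉ x.1.2 := fun h => hdl h
      have h2 : y ∈ x.2 → y ∈ x.1.2 := fun h => hsub h
      tauto
    simp only [Finset.mem_filter, Finset.mem_product, Finset.mem_powersetCard_univ]
    have hd1 : Disjoint x.1.1 (x.1.2 \ x.2) := hd.mono_right (Finset.sdiff_subset)
    have hd2 : Disjoint x.1.1 x.2 := hd.mono_right hsub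
    rw [Finset.card_union_of_disjoint hd1, Finset.card_union_of_disjoint hd2,
      Finset.card_sdiff_of_subset hsub, hinter]
    refine ⟨⟨?_, ?_⟩, hW⟩ <;> omega
  · -- left inverse
    intro p hp
    have h1 : (p.1 ∩ p.2) ∪ (((p.1 ∪ p.2) \ (p.1 ∩ p.2)) \ (p.2 \ p.1)) = p.1 := by
      ext y
      simp only [Finset.mem_union, Finset.mem_inter, Finset.mem_sdiff]
      tauto
    have h2 : (p.1 ∩ p.2) ∪ (p.2 \ p.1) = p.2 := by
      ext y
      simp only [Finset.mem_union, Finset.mem_inter, Finset.mem_sdiff]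
      tauto
    exact Prod.ext h1 h2
  · -- right inverse
    intro x hx
    rw [Finset.mem_sigma] at hx
    obtain ⟨hq, hs⟩ := hx
    simp only [Finset.mem_filter, Finset.mem_product, Finset.mem_powersetCard_univ] at hq
    obtain ⟨⟨hW, hU⟩, hd⟩ := hq
    rw [Finset.mem_powersetCard] at hs
    obtain ⟨hsub, hcs⟩ := hs
    have hdl := Finset.disjoint_left.mp hd
    have hinter : (x.1.1 ∪ (x.1.2 \ x.2)) ∩ (x.1.1 ∪ x.2) = x.1.1 := by
      ext y
      simp only [Finset.mem_inter, Finset.mem_union, Finset.mem_sdiff]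
      have h1 : y ∈ x.1.1 → y ∉ x.1.2 := fun h => hdl h
      have h2 : y ∈ x.2 → y ∈ x.1.2 := fun h => hsub h
      tauto
    have hunion : ((x.1.1 ∪ (x.1.2 \ x.2)) ∪ (x.1.1 ∪ x.2)) \ x.1.1 = x.1.2 := by
      ext y
      simp only [Finset.mem_sdiff, Finset.mem_union]
      have h1 : y ∈ x.1.1 → y ∉ x.1.2 := fun h => hdl h
      have h2 : y ∈ x.2 → y ∈ x.1.2 := fun h => hsub h
      tauto
    have hsd : (x.1.1 ∪ x.2) \ (x.1.1 ∪ (x.1.2 \ x.2)) = x.2 := by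
      ext y
      simp only [Finset.mem_sdiff, Finset.mem_union]
      have h1 : y ∈ x.1.1 → y ∉ x.1.2 := fun h => hdl h
      have h2 : y ∈ x.2 → y ∈ x.1.2 := fun h => hsub h
      tauto
    refine Sigma.ext ?_ (heq_of_eq ?_)
    · dsimp only
      rw [hinter]
      refine Prod.ext rfl ?_
      dsimp only
      rw [hunion]
    · dsimp only
      rw [hsd]
  · -- values
    intro p hp
    exact congrArg (fun m => (Multiset.map (X : σ → MvPolynomial σ ℚ) m).prod) (val_pair_eq p.1 p.2)

lemma esymm_mul (a b : ℕ) (hba : b ≤ a) :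
    esymm σ ℚ a * esymm σ ℚ b
      = ∑ j ∈ Finset.range (b+1), (a + b - 2*j).choose (b - j) • S2pol σ j (a + b - 2*j) := by
  rw [esymm, esymm, Finset.sum_mul_sum]
  have h1 : ∑ S ∈ powersetCard a (univ : Finset σ), ∑ T ∈ powersetCard b univ,
      (∏ i ∈ S, (X i : MvPolynomial σ ℚ)) * ∏ i ∈ T, X i
      = ∑ p ∈ powersetCard a (univ : Finset σ) ×ˢ powersetCard b univ,
        ((p.1.val + p.2.val).map (X : σ → MvPolynomial σ ℚ)).prod := by
    rw [Finset.sum_product]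
    exact Finset.sum_congr rfl (fun S _ => Finset.sum_congr rfl (fun T _ => by
      rw [Multiset.map_add, Multiset.prod_add]; rfl))
  rw [h1]
  have hmaps : ∀ p ∈ powersetCard a (univ : Finset σ) ×ˢ powersetCard b univ,
      (p.1 ∩ p.2).card ∈ Finset.range (b+1) := by
    intro p hp
    simp only [Finset.mem_product, Finset.mem_powersetCard_univ] at hp
    refine Finset.mem_range.mpr ?_
    have := Finset.card_le_card (Finset.inter_subset_right : p.1 ∩ p.2 ⊆ p.2)
    omega
  rw [← Finset.sum_fiberwise_of_maps_to hmaps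
    (fun p => ((p.1.val + p.2.val).map (X : σ → MvPolynomial σ ℚ)).prod)]
  refine Finset.sum_congr rfl (fun j hj => ?_)
  have hjb : j ≤ b := Nat.lt_succ_iff.mp (Finset.mem_range.mp hj)
  exact key a b j (hjb.trans hba) hjb

end MsymmTwoTwoOnesAux


open MvPolynomial in
/-- The monomial symmetric function `m_{(2,2,1^{n-1})}` of degree `n + 3` expands in the
elementary basis as
`m_{(2,2,1^{n-1})} = e_{(n+1,2)} - (n+1) e_{(n+2,1)} + (n(n+3)/2) e_{(n+3)}`. -/
theorem msymm_two_two_ones (n N : ℕ) (hn : 1 ≤ n) (p : Nat.Partition (n + 3))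
    (hp : p.parts = 2 ::ₘ 2 ::ₘ Multiset.replicate (n - 1) 1) :
    msymm (Fin N) ℚ p =
      esymm (Fin N) ℚ (n + 1) * esymm (Fin N) ℚ 2
        - ((n + 1 : ℕ) : ℚ) • (esymm (Fin N) ℚ (n + 2) * esymm (Fin N) ℚ 1)
        + (((n * (n + 3) : ℕ) : ℚ) / 2) • esymm (Fin N) ℚ (n + 3) := by
  have e3 : esymm (Fin N) ℚ (n+3) = S2pol (Fin N) 0 (n+3) := by
    have h := esymm_mul (σ := Fin N) (n+3) 0 (by omega)
    rw [esymm_zero, mul_one, Finset.sum_range_succ, Finset.sum_range_zero, zero_add,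
      show n+3+0-2*0 = n+3 from by omega, show (0:ℕ)-0 = 0 from rfl, Nat.choose_zero_right,
      one_smul] at h
    exact h
  have e2 : esymm (Fin N) ℚ (n+2) * esymm (Fin N) ℚ 1
      = (n+3) • S2pol (Fin N) 0 (n+3) + S2pol (Fin N) 1 (n+1) := by
    have h := esymm_mul (σ := Fin N) (n+2) 1 (by omega)
    rw [Finset.sum_range_succ, Finset.sum_range_succ, Finset.sum_range_zero, zero_add,
      show n+2+1-2*0 = n+3 from by omega, show n+2+1-2*1 = n+1 from by omega,
      show (1:ℕ)-0 = 1 from rfl, show (1:ℕ)-1 = 0 from rfl,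
      Nat.choose_one_right, Nat.choose_zero_right, one_smul] at h
    exact h
  have e1 : esymm (Fin N) ℚ (n+1) * esymm (Fin N) ℚ 2
      = ((n+3).choose 2) • S2pol (Fin N) 0 (n+3) + (n+1) • S2pol (Fin N) 1 (n+1)
        + S2pol (Fin N) 2 (n-1) := by
    have h := esymm_mul (σ := Fin N) (n+1) 2 (by omega)
    rw [Finset.sum_range_succ, Finset.sum_range_succ, Finset.sum_range_succ,
      Finset.sum_range_zero, zero_add,
      show n+1+2-2*0 = n+3 from by omega, show n+1+2-2*1 = n+1 from by omega,
      show n+1+2-2*2 = n-1 from by omega,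
      show (2:ℕ)-0 = 2 from rfl, show (2:ℕ)-1 = 1 from rfl, show (2:ℕ)-2 = 0 from rfl,
      Nat.choose_one_right, Nat.choose_zero_right, one_smul] at h
    exact h
  have hch : (((n+3).choose 2 : ℕ) : ℚ) = ((n:ℚ)+3)*((n:ℚ)+2)/2 := by
    have hdvd : 2 ∣ (n+2) * (n+3) := (Nat.even_mul_succ_self (n+2)).two_dvd
    have h2 : (n+3).choose 2 * 2 = (n+3) * (n+2) := by
      rw [Nat.choose_two_right, show n+3-1 = n+2 from by omega,
        Nat.div_mul_cancel (by rwa [Nat.mul_comm] at hdvd)]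
    have := congrArg (fun k : ℕ => (k : ℚ)) h2
    push_cast at this
    linarith
  rw [msymm_eq hn p hp, e1, e2, e3]
  rw [← Nat.cast_smul_eq_nsmul ℚ ((n+3).choose 2), ← Nat.cast_smul_eq_nsmul ℚ (n+1),
    ← Nat.cast_smul_eq_nsmul ℚ (n+3), hch]
  push_cast
  match_scalars <;> ring
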